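/- Let G be the subgroup of GL(3,ℂ) generated by R₁, R₂, R₃. For all v₁, v₂ ∈ ℂ, the translation matrix T_{(v₁,v₂)} belongs to G if and only if there exist integers a, b, c, d with v₁ = a + b·i√2 and v₂ = c + d·i√2. (Equivalently: the kernel of the linear-part homomorphism on G is exactly the group of translations by the lattice Λ = (ℤ ⊕ i√2·ℤ)².) -/

import Mathlib

open Matrix

noncomputable section

/-- i√2. -/
def s2 : ℂ := Complex.I * Real.sqrt 2

/-- R₁ = [[1,0,0],[0,1,0],[0,1−i√2,−1]]. -/
def R₁ : Matrix (Fin 3) (Fin 3) ℂ := !![1, 0, 0; 0, 1, 0; 0, 1 - s2, -1]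

/-- R₂ = [[1,0,0],[0,−1+i√2,2],[0,1+i√2,1−i√2]]. -/
def R₂ : Matrix (Fin 3) (Fin 3) ℂ := !![1, 0, 0; 0, -1 + s2, 2; 0, 1 + s2, 1 - s2]

/-- R₃ = [[1,0,0],[(1+i√2)/2,1,−1−i√2],[1,0,−1]]. -/
def R₃ : Matrix (Fin 3) (Fin 3) ℂ := !![1, 0, 0; (1 + s2) / 2, 1, -1 - s2; 1, 0, -1]

/-- The translation matrix T_v for v = (v₁, v₂). -/
def T (v₁ v₂ : ℂ) : Matrix (Fin 3) (Fin 3) ℂ := !![1, 0, 0; v₁, 1, 0; v₂, 0, 1]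

/-- A₁, the linear part of R₁. -/
def A₁ : Matrix (Fin 2) (Fin 2) ℂ := !![1, 0; 1 - s2, -1]

/-- A₂, the linear part of R₂. -/
def A₂ : Matrix (Fin 2) (Fin 2) ℂ := !![-1 + s2, 2; 1 + s2, 1 - s2]

/-- A₃, the linear part of R₃. -/
def A₃ : Matrix (Fin 2) (Fin 2) ℂ := !![1, -1 - s2; 0, -1]

end

open scoped MatrixGroups

/-- The subgroup of GL(3,ℂ) generated by (the invertible-matrix lifts of) R₁, R₂, R₃. -/
noncomputable def G : Subgroup (GL (Fin 3) ℂ) :=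
  Subgroup.closure {g : GL (Fin 3) ℂ | (g : Matrix (Fin 3) (Fin 3) ℂ) ∈ ({R₁, R₂, R₃} : Set _)}

/-! ### Auxiliary development -/

lemma s2_sq : s2 * s2 = -2 := by
  have h2 : ((Real.sqrt 2 : ℝ) : ℂ) * ((Real.sqrt 2 : ℝ) : ℂ) = 2 := by
    norm_cast
    rw [Real.mul_self_sqrt (by norm_num : (0:ℝ) ≤ 2)]
  rw [s2, show Complex.I * ↑(Real.sqrt 2) * (Complex.I * ↑(Real.sqrt 2)) =
    Complex.I * Complex.I * (↑(Real.sqrt 2) * ↑(Real.sqrt 2)) from by ring,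
    Complex.I_mul_I, h2]
  ring

lemma s2_pow : s2 ^ 2 = -2 := by rw [sq]; exact s2_sq

/-! #### The mod-2 layer: the ring (ℤ/2)[ε], ε² = 0, 2×2 matrices over it, and the
cocycle table `gam`. -/

abbrev Q2 := ZMod 2 × ZMod 2
def qmul (x y : Q2) : Q2 := (x.1 * y.1, x.1 * y.2 + x.2 * y.1)
def qadd (x y : Q2) : Q2 := (x.1 + y.1, x.2 + y.2)
abbrev MM := (Q2 × Q2) × (Q2 × Q2)
abbrev VV := Q2 × Q2
def mmulQ (m n : MM) : MM :=
  ((qadd (qmul m.1.1 n.1.1) (qmul m.1.2 n.2.1), qadd (qmul m.1.1 n.1.2) (qmul m.1.2 n.2.2)),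
   (qadd (qmul m.2.1 n.1.1) (qmul m.2.2 n.2.1), qadd (qmul m.2.1 n.1.2) (qmul m.2.2 n.2.2)))
def actQ (m : MM) (v : VV) : VV :=
  (qadd (qmul m.1.1 v.1) (qmul m.1.2 v.2), qadd (qmul m.2.1 v.1) (qmul m.2.2 v.2))
def vaddQ (v w : VV) : VV := (qadd v.1 w.1, qadd v.2 w.2)

def gam : List (MM × VV) := [
  ((((0, 0), (1, 0)), ((1, 0), (0, 1))), ((1, 0), (1, 0))),
  ((((0, 0), (1, 0)), ((1, 0), (1, 0))), ((1, 0), (0, 1))),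
  ((((0, 0), (1, 1)), ((1, 1), (0, 0))), ((1, 1), (1, 0))),
  ((((0, 0), (1, 1)), ((1, 1), (1, 0))), ((1, 1), (0, 0))),
  ((((0, 1), (1, 0)), ((1, 0), (0, 0))), ((1, 1), (1, 0))),
  ((((0, 1), (1, 0)), ((1, 1), (1, 1))), ((1, 1), (0, 0))),
  ((((0, 1), (1, 1)), ((1, 0), (1, 1))), ((1, 0), (0, 1))),
  ((((0, 1), (1, 1)), ((1, 1), (0, 1))), ((1, 0), (1, 0))),
  ((((1, 0), (0, 0)), ((0, 0), (1, 0))), ((0, 0), (0, 0))),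
  ((((1, 0), (0, 0)), ((1, 1), (1, 0))), ((0, 0), (0, 0))),
  ((((1, 0), (0, 1)), ((0, 1), (1, 0))), ((0, 0), (0, 1))),
  ((((1, 0), (0, 1)), ((1, 0), (1, 1))), ((0, 0), (0, 1))),
  ((((1, 0), (1, 0)), ((0, 1), (1, 1))), ((1, 1), (0, 0))),
  ((((1, 0), (1, 0)), ((1, 0), (0, 0))), ((1, 1), (1, 0))),
  ((((1, 0), (1, 1)), ((0, 0), (1, 0))), ((1, 1), (0, 0))),
  ((((1, 0), (1, 1)), ((1, 1), (0, 0))), ((1, 1), (1, 0))),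
  ((((1, 1), (0, 0)), ((0, 1), (1, 1))), ((0, 0), (0, 0))),
  ((((1, 1), (0, 0)), ((1, 1), (1, 1))), ((0, 0), (0, 0))),
  ((((1, 1), (0, 1)), ((0, 0), (1, 1))), ((0, 0), (0, 1))),
  ((((1, 1), (0, 1)), ((1, 0), (1, 0))), ((0, 0), (0, 1))),
  ((((1, 1), (1, 0)), ((0, 1), (1, 0))), ((1, 0), (0, 1))),
  ((((1, 1), (1, 0)), ((1, 1), (0, 1))), ((1, 0), (1, 0))),
  ((((1, 1), (1, 1)), ((0, 0), (1, 1))), ((1, 0), (0, 1))),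
  ((((1, 1), (1, 1)), ((1, 0), (0, 1))), ((1, 0), (1, 0)))]

lemma gam_mul : ∀ p ∈ gam, ∀ q ∈ gam,
    (mmulQ p.1 q.1, vaddQ p.2 (actQ p.1 q.2)) ∈ gam := by decide

lemma gam_id : ∀ p ∈ gam, p.1 = (((1, 0), (0, 0)), ((0, 0), (1, 0))) →
    p.2 = ((0, 0), (0, 0)) := by decide

lemma gam_one : (((((1 : ZMod 2), (0 : ZMod 2)), ((0 : ZMod 2), (0 : ZMod 2))),
    (((0 : ZMod 2), (0 : ZMod 2)), ((1 : ZMod 2), (0 : ZMod 2)))),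
    ((((0 : ZMod 2), (0 : ZMod 2)), ((0 : ZMod 2), (0 : ZMod 2))) : VV)) ∈ gam := by decide

/-! #### The integral layer: pairs of integers representing a + b·i√2. -/

noncomputable def c2 (x : ℤ × ℤ) : ℂ := x.1 + x.2 * s2
def zmul (x y : ℤ × ℤ) : ℤ × ℤ := (x.1 * y.1 - 2 * x.2 * y.2, x.1 * y.2 + x.2 * y.1)
def rd (x : ℤ × ℤ) : Q2 := ((x.1 : ZMod 2), (x.2 : ZMod 2))

lemma c2_add (x y : ℤ × ℤ) : c2 (x + y) = c2 x + c2 y := by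
  simp only [c2, Prod.fst_add, Prod.snd_add]
  push_cast
  ring

lemma c2_mul (x y : ℤ × ℤ) : c2 (zmul x y) = c2 x * c2 y := by
  simp only [c2, zmul]
  push_cast
  linear_combination (-(x.2 : ℂ) * (y.2 : ℂ)) * s2_sq

lemma rd_add (x y : ℤ × ℤ) : rd (x + y) = qadd (rd x) (rd y) := by
  simp only [rd, qadd, Prod.fst_add, Prod.snd_add, Prod.mk.injEq]
  push_cast
  exact ⟨rfl, rfl⟩

lemma rd_mul (x y : ℤ × ℤ) : rd (zmul x y) = qmul (rd x) (rd y) := by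
  have h2 : (2 : ZMod 2) = 0 := rfl
  simp only [rd, zmul, qmul, Prod.mk.injEq]
  push_cast
  constructor
  · linear_combination (-(x.2 : ZMod 2) * (y.2 : ZMod 2)) * h2
  · ring

lemma c2_inj {x y : ℤ × ℤ} (h : c2 x = c2 y) : x = y := by
  simp only [c2] at h
  have h' : ((x.1 - y.1 : ℤ) : ℂ) = ((y.2 - x.2 : ℤ) : ℂ) * s2 := by
    push_cast
    linear_combination h
  have hC : ((x.1 - y.1 : ℤ) : ℂ) ^ 2 + 2 * ((y.2 - x.2 : ℤ) : ℂ) ^ 2 = 0 := by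
    linear_combination (((x.1 - y.1 : ℤ) : ℂ) + ((y.2 - x.2 : ℤ) : ℂ) * s2) * h'
      + ((y.2 - x.2 : ℤ) : ℂ) ^ 2 * s2_sq
  have hZ : (x.1 - y.1) ^ 2 + 2 * (y.2 - x.2) ^ 2 = (0 : ℤ) := by exact_mod_cast hC
  have h1 : x.1 = y.1 := by nlinarith [sq_nonneg (x.1 - y.1), sq_nonneg (y.2 - x.2)]
  have h2 : x.2 = y.2 := by nlinarith [sq_nonneg (x.1 - y.1), sq_nonneg (y.2 - x.2)]
  exact Prod.ext h1 h2

lemma c2_zero : c2 (0, 0) = 0 := by simp [c2]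
lemma c2_one : c2 (1, 0) = 1 := by simp [c2]

/-! #### The invariant predicate. -/

def PP (g : Matrix (Fin 3) (Fin 3) ℂ) : Prop :=
  ∃ t₁ t₂ e₀ e₁ e₂ e₃ : ℤ × ℤ,
    g 0 0 = 1 ∧ g 0 1 = 0 ∧ g 0 2 = 0 ∧
    g 1 0 = c2 t₁ / 2 ∧ g 2 0 = c2 t₂ / 2 ∧
    g 1 1 = c2 e₀ ∧ g 1 2 = c2 e₁ ∧ g 2 1 = c2 e₂ ∧ g 2 2 = c2 e₃ ∧
    ((((rd e₀, rd e₁), (rd e₂, rd e₃)) : MM), ((rd t₁, rd t₂) : VV)) ∈ gam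

lemma PP_one : PP (1 : Matrix (Fin 3) (Fin 3) ℂ) := by
  refine ⟨(0,0), (0,0), (1,0), (0,0), (0,0), (1,0), ?_, ?_, ?_, ?_, ?_, ?_, ?_, ?_, ?_, ?_⟩
  · simp [Matrix.one_apply]
  · simp [Matrix.one_apply]
  · simp [Matrix.one_apply]
  · simp [Matrix.one_apply, c2]
  · simp [Matrix.one_apply, c2]
  · simp [Matrix.one_apply, c2]
  · simp [Matrix.one_apply, c2]
  · simp [Matrix.one_apply, c2]
  · simp [Matrix.one_apply, c2]
  · exact gam_one

lemma PP_R₁ : PP R₁ := by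
  refine ⟨(0,0), (0,0), (1,0), (0,0), (1,-1), (-1,0), ?_, ?_, ?_, ?_, ?_, ?_, ?_, ?_, ?_, by decide⟩ <;>
    norm_num [R₁, c2, Matrix.vecHead, Matrix.vecTail, Matrix.cons_val_two] <;> ring

lemma PP_R₂ : PP R₂ := by
  refine ⟨(0,0), (0,0), (-1,1), (2,0), (1,1), (1,-1), ?_, ?_, ?_, ?_, ?_, ?_, ?_, ?_, ?_, by decide⟩ <;>
    norm_num [R₂, c2, Matrix.vecHead, Matrix.vecTail, Matrix.cons_val_two] <;> ring

lemma PP_R₃ : PP R₃ := by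
  refine ⟨(1,1), (2,0), (1,0), (-1,-1), (0,0), (-1,0), ?_, ?_, ?_, ?_, ?_, ?_, ?_, ?_, ?_, by decide⟩ <;>
    norm_num [R₃, c2, Matrix.vecHead, Matrix.vecTail, Matrix.cons_val_two] <;> ring

lemma PP_mul {g h : Matrix (Fin 3) (Fin 3) ℂ} (hg : PP g) (hh : PP h) : PP (g * h) := by
  obtain ⟨t₁, t₂, e₀, e₁, e₂, e₃, a1, a2, a3, a4, a5, a6, a7, a8, a9, amem⟩ := hg
  obtain ⟨u₁, u₂, f₀, f₁, f₂, f₃, b1, b2, b3, b4, b5, b6, b7, b8, b9, bmem⟩ := hh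
  refine ⟨t₁ + (zmul e₀ u₁ + zmul e₁ u₂), t₂ + (zmul e₂ u₁ + zmul e₃ u₂),
    zmul e₀ f₀ + zmul e₁ f₂, zmul e₀ f₁ + zmul e₁ f₃,
    zmul e₂ f₀ + zmul e₃ f₂, zmul e₂ f₁ + zmul e₃ f₃,
    ?_, ?_, ?_, ?_, ?_, ?_, ?_, ?_, ?_, ?_⟩
  · rw [Matrix.mul_apply, Fin.sum_univ_three, a1, a2, a3, b1, b4, b5]; ring
  · rw [Matrix.mul_apply, Fin.sum_univ_three, a1, a2, a3, b2, b6, b8]; ring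
  · rw [Matrix.mul_apply, Fin.sum_univ_three, a1, a2, a3, b3, b7, b9]; ring
  · rw [Matrix.mul_apply, Fin.sum_univ_three, a4, a6, a7, b1, b4, b5,
      c2_add, c2_add, c2_mul, c2_mul]; ring
  · rw [Matrix.mul_apply, Fin.sum_univ_three, a5, a8, a9, b1, b4, b5,
      c2_add, c2_add, c2_mul, c2_mul]; ring
  · rw [Matrix.mul_apply, Fin.sum_univ_three, a4, a6, a7, b2, b6, b8,
      c2_add, c2_mul, c2_mul]; ring
  · rw [Matrix.mul_apply, Fin.sum_univ_three, a4, a6, a7, b3, b7, b9,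
      c2_add, c2_mul, c2_mul]; ring
  · rw [Matrix.mul_apply, Fin.sum_univ_three, a5, a8, a9, b2, b6, b8,
      c2_add, c2_mul, c2_mul]; ring
  · rw [Matrix.mul_apply, Fin.sum_univ_three, a5, a8, a9, b3, b7, b9,
      c2_add, c2_mul, c2_mul]; ring
  · have hm := gam_mul _ amem _ bmem
    simpa only [mmulQ, actQ, vaddQ, rd_add, rd_mul] using hm

/-! #### Involution lemmas and the generating set. -/

lemma R₁_sq : R₁ * R₁ = 1 := by
  ext i j
  fin_cases i <;> fin_cases j <;>
    simp [R₁, Matrix.mul_apply, Fin.sum_univ_three, Matrix.one_apply, Matrix.vecHead, Matrix.vecTail] <;>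
    (try ring_nf) <;> (try simp only [s2_pow]) <;> (try ring_nf) <;> (try norm_num)

lemma R₂_sq : R₂ * R₂ = 1 := by
  ext i j
  fin_cases i <;> fin_cases j <;>
    simp [R₂, Matrix.mul_apply, Fin.sum_univ_three, Matrix.one_apply, Matrix.vecHead, Matrix.vecTail] <;>
    (try ring_nf) <;> (try simp only [s2_pow]) <;> (try ring_nf) <;> (try norm_num)

lemma R₃_sq : R₃ * R₃ = 1 := by
  ext i j
  fin_cases i <;> fin_cases j <;>
    simp [R₃, Matrix.mul_apply, Fin.sum_univ_three, Matrix.one_apply, Matrix.vecHead, Matrix.vecTail] <;>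
    (try ring_nf) <;> (try simp only [s2_pow]) <;> (try ring_nf) <;> (try norm_num)

def SS : Set (GL (Fin 3) ℂ) :=
  {g : GL (Fin 3) ℂ | (g : Matrix (Fin 3) (Fin 3) ℂ) ∈ ({R₁, R₂, R₃} : Set _)}

lemma G_eq : G = Subgroup.closure SS := rfl

lemma PP_of_mem_set {x : GL (Fin 3) ℂ} (hx : x ∈ SS) :
    PP (x : Matrix (Fin 3) (Fin 3) ℂ) := by
  rcases hx with h | h | h
  · rw [h]; exact PP_R₁
  · rw [h]; exact PP_R₂
  · rw [h]; exact PP_R₃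

lemma main_fwd (g : GL (Fin 3) ℂ) (hg : g ∈ G) :
    PP (g : Matrix (Fin 3) (Fin 3) ℂ) := by
  rw [G_eq] at hg
  have hg2 : g ∈ (Subgroup.closure SS).toSubmonoid := hg
  rw [Subgroup.closure_toSubmonoid] at hg2
  refine Submonoid.closure_induction (s := SS ∪ SS⁻¹)
    (motive := fun (x : GL (Fin 3) ℂ) _ => PP ((x : GL (Fin 3) ℂ) : Matrix (Fin 3) (Fin 3) ℂ))
    ?_ ?_ ?_ hg2
  · rintro x (hx | hx)
    · exact PP_of_mem_set hx
    · rw [Set.mem_inv] at hx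
      have hinv : PP ((x⁻¹ : GL (Fin 3) ℂ) : Matrix (Fin 3) (Fin 3) ℂ) := PP_of_mem_set hx
      have h1 : (x : Matrix (Fin 3) (Fin 3) ℂ) * ((x⁻¹ : GL (Fin 3) ℂ) : Matrix (Fin 3) (Fin 3) ℂ) = 1 := by
        rw [← Units.val_mul, mul_inv_cancel, Units.val_one]
      rcases hx with h | h | h
      · have : (x : Matrix (Fin 3) (Fin 3) ℂ) = R₁ := by
          calc (x : Matrix (Fin 3) (Fin 3) ℂ)
              = x * (((x⁻¹ : GL (Fin 3) ℂ) : Matrix (Fin 3) (Fin 3) ℂ) *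
                ((x⁻¹ : GL (Fin 3) ℂ) : Matrix (Fin 3) (Fin 3) ℂ)) := by
                  rw [h, R₁_sq, mul_one]
            _ = ((x : Matrix (Fin 3) (Fin 3) ℂ) * _) * _ := by rw [mul_assoc]
            _ = R₁ := by rw [h1, one_mul, h]
        rw [this]; exact PP_R₁
      · have : (x : Matrix (Fin 3) (Fin 3) ℂ) = R₂ := by
          calc (x : Matrix (Fin 3) (Fin 3) ℂ)
              = x * (((x⁻¹ : GL (Fin 3) ℂ) : Matrix (Fin 3) (Fin 3) ℂ) *
                ((x⁻¹ : GL (Fin 3) ℂ) : Matrix (Fin 3) (Fin 3) ℂ)) := by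
                  rw [h, R₂_sq, mul_one]
            _ = ((x : Matrix (Fin 3) (Fin 3) ℂ) * _) * _ := by rw [mul_assoc]
            _ = R₂ := by rw [h1, one_mul, h]
        rw [this]; exact PP_R₂
      · have : (x : Matrix (Fin 3) (Fin 3) ℂ) = R₃ := by
          calc (x : Matrix (Fin 3) (Fin 3) ℂ)
              = x * (((x⁻¹ : GL (Fin 3) ℂ) : Matrix (Fin 3) (Fin 3) ℂ) *
                ((x⁻¹ : GL (Fin 3) ℂ) : Matrix (Fin 3) (Fin 3) ℂ)) := by
                  rw [h, R₃_sq, mul_one]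
            _ = ((x : Matrix (Fin 3) (Fin 3) ℂ) * _) * _ := by rw [mul_assoc]
            _ = R₃ := by rw [h1, one_mul, h]
        rw [this]; exact PP_R₃
  · show PP ((1 : GL (Fin 3) ℂ) : Matrix (Fin 3) (Fin 3) ℂ)
    rw [Units.val_one]; exact PP_one
  · intro x y _ _ hx hy
    show PP ((x * y : GL (Fin 3) ℂ) : Matrix (Fin 3) (Fin 3) ℂ)
    rw [Units.val_mul]; exact PP_mul hx hy

/-! #### Explicit words giving the lattice translations. -/

lemma word₁ : R₁*R₂*R₃*R₁*R₂*R₁*R₂*R₃*R₁*R₂ = T 1 (-s2) := by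
    have h1 : (R₁ : Matrix (Fin 3) (Fin 3) ℂ) * R₂ = !![1, 0, 0; 0, ((-1) + s2), 2; 0, s2, (1 - s2)] := by
      ext i j
      fin_cases i <;> fin_cases j <;>
        simp [R₁, R₂, R₃, Matrix.mul_apply, Fin.sum_univ_three, Matrix.vecHead, Matrix.vecTail] <;>
        (try ring_nf) <;> (try simp only [s2_pow]) <;> (try ring_nf) <;> (try norm_num)
    have h2 : (!![1, 0, 0; 0, ((-1) + s2), 2; 0, s2, (1 - s2)] : Matrix (Fin 3) (Fin 3) ℂ) * R₃ = !![1, 0, 0; (1/2), ((-1) + s2), 1; (-1/2) * s2, s2, 1] := by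
      ext i j
      fin_cases i <;> fin_cases j <;>
        simp [R₃, Matrix.mul_apply, Fin.sum_univ_three, Matrix.vecHead, Matrix.vecTail] <;>
        (try ring_nf) <;> (try simp only [s2_pow]) <;> (try ring_nf) <;> (try norm_num)
    have h3 : (!![1, 0, 0; (1/2), ((-1) + s2), 1; (-1/2) * s2, s2, 1] : Matrix (Fin 3) (Fin 3) ℂ) * R₁ = !![1, 0, 0; (1/2), 0, (-1); (-1/2) * s2, 1, (-1)] := by
      ext i j
      fin_cases i <;> fin_cases j <;>
        simp [R₁, Matrix.mul_apply, Fin.sum_univ_three, Matrix.vecHead, Matrix.vecTail] <;>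
        (try ring_nf) <;> (try simp only [s2_pow]) <;> (try ring_nf) <;> (try norm_num)
    have h4 : (!![1, 0, 0; (1/2), 0, (-1); (-1/2) * s2, 1, (-1)] : Matrix (Fin 3) (Fin 3) ℂ) * R₂ = !![1, 0, 0; (1/2), ((-1) - s2), ((-1) + s2); (-1/2) * s2, (-2), (1 + s2)] := by
      ext i j
      fin_cases i <;> fin_cases j <;>
        simp [R₂, Matrix.mul_apply, Fin.sum_univ_three, Matrix.vecHead, Matrix.vecTail] <;>
        (try ring_nf) <;> (try simp only [s2_pow]) <;> (try ring_nf) <;> (try norm_num)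
    have h5 : (!![1, 0, 0; (1/2), ((-1) - s2), ((-1) + s2); (-1/2) * s2, (-2), (1 + s2)] : Matrix (Fin 3) (Fin 3) ℂ) * R₁ = !![1, 0, 0; (1/2), s2, (1 - s2); (-1/2) * s2, 1, ((-1) - s2)] := by
      ext i j
      fin_cases i <;> fin_cases j <;>
        simp [R₁, Matrix.mul_apply, Fin.sum_univ_three, Matrix.vecHead, Matrix.vecTail] <;>
        (try ring_nf) <;> (try simp only [s2_pow]) <;> (try ring_nf) <;> (try norm_num)
    have h6 : (!![1, 0, 0; (1/2), s2, (1 - s2); (-1/2) * s2, 1, ((-1) - s2)] : Matrix (Fin 3) (Fin 3) ℂ) * R₂ = !![1, 0, 0; (1/2), (1 - s2), (-1); (-1/2) * s2, -s2, (-1)] := by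
      ext i j
      fin_cases i <;> fin_cases j <;>
        simp [R₂, Matrix.mul_apply, Fin.sum_univ_three, Matrix.vecHead, Matrix.vecTail] <;>
        (try ring_nf) <;> (try simp only [s2_pow]) <;> (try ring_nf) <;> (try norm_num)
    have h7 : (!![1, 0, 0; (1/2), (1 - s2), (-1); (-1/2) * s2, -s2, (-1)] : Matrix (Fin 3) (Fin 3) ℂ) * R₃ = !![1, 0, 0; 1, (1 - s2), (-2); -s2, -s2, ((-1) + s2)] := by
      ext i j
      fin_cases i <;> fin_cases j <;>
        simp [R₃, Matrix.mul_apply, Fin.sum_univ_three, Matrix.vecHead, Matrix.vecTail] <;>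
        (try ring_nf) <;> (try simp only [s2_pow]) <;> (try ring_nf) <;> (try norm_num)
    have h8 : (!![1, 0, 0; 1, (1 - s2), (-2); -s2, -s2, ((-1) + s2)] : Matrix (Fin 3) (Fin 3) ℂ) * R₁ = !![1, 0, 0; 1, ((-1) + s2), 2; -s2, (1 + s2), (1 - s2)] := by
      ext i j
      fin_cases i <;> fin_cases j <;>
        simp [R₁, Matrix.mul_apply, Fin.sum_univ_three, Matrix.vecHead, Matrix.vecTail] <;>
        (try ring_nf) <;> (try simp only [s2_pow]) <;> (try ring_nf) <;> (try norm_num)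
    have h9 : (!![1, 0, 0; 1, ((-1) + s2), 2; -s2, (1 + s2), (1 - s2)] : Matrix (Fin 3) (Fin 3) ℂ) * R₂ = !![1, 0, 0; 1, 1, 0; -s2, 0, 1] := by
      ext i j
      fin_cases i <;> fin_cases j <;>
        simp [R₂, Matrix.mul_apply, Fin.sum_univ_three, Matrix.vecHead, Matrix.vecTail] <;>
        (try ring_nf) <;> (try simp only [s2_pow]) <;> (try ring_nf) <;> (try norm_num)
    rw [h1, h2, h3, h4, h5, h6, h7, h8, h9, T]

lemma word₂ : R₂*R₃*R₁*R₂*R₁*R₂*R₃*R₁*R₂*R₁ = T 1 1 := by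
    have h1 : (R₂ : Matrix (Fin 3) (Fin 3) ℂ) * R₃ = !![1, 0, 0; (1/2), ((-1) + s2), 1; (1/2), (1 + s2), -s2] := by
      ext i j
      fin_cases i <;> fin_cases j <;>
        simp [R₁, R₂, R₃, Matrix.mul_apply, Fin.sum_univ_three, Matrix.vecHead, Matrix.vecTail] <;>
        (try ring_nf) <;> (try simp only [s2_pow]) <;> (try ring_nf) <;> (try norm_num)
    have h2 : (!![1, 0, 0; (1/2), ((-1) + s2), 1; (1/2), (1 + s2), -s2] : Matrix (Fin 3) (Fin 3) ℂ) * R₁ = !![1, 0, 0; (1/2), 0, (-1); (1/2), (-1), s2] := by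
      ext i j
      fin_cases i <;> fin_cases j <;>
        simp [R₁, Matrix.mul_apply, Fin.sum_univ_three, Matrix.vecHead, Matrix.vecTail] <;>
        (try ring_nf) <;> (try simp only [s2_pow]) <;> (try ring_nf) <;> (try norm_num)
    have h3 : (!![1, 0, 0; (1/2), 0, (-1); (1/2), (-1), s2] : Matrix (Fin 3) (Fin 3) ℂ) * R₂ = !![1, 0, 0; (1/2), ((-1) - s2), ((-1) + s2); (1/2), (-1), s2] := by
      ext i j
      fin_cases i <;> fin_cases j <;>
        simp [R₂, Matrix.mul_apply, Fin.sum_univ_three, Matrix.vecHead, Matrix.vecTail] <;>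
        (try ring_nf) <;> (try simp only [s2_pow]) <;> (try ring_nf) <;> (try norm_num)
    have h4 : (!![1, 0, 0; (1/2), ((-1) - s2), ((-1) + s2); (1/2), (-1), s2] : Matrix (Fin 3) (Fin 3) ℂ) * R₁ = !![1, 0, 0; (1/2), s2, (1 - s2); (1/2), (1 + s2), -s2] := by
      ext i j
      fin_cases i <;> fin_cases j <;>
        simp [R₁, Matrix.mul_apply, Fin.sum_univ_three, Matrix.vecHead, Matrix.vecTail] <;>
        (try ring_nf) <;> (try simp only [s2_pow]) <;> (try ring_nf) <;> (try norm_num)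
    have h5 : (!![1, 0, 0; (1/2), s2, (1 - s2); (1/2), (1 + s2), -s2] : Matrix (Fin 3) (Fin 3) ℂ) * R₂ = !![1, 0, 0; (1/2), (1 - s2), (-1); (1/2), ((-1) - s2), s2] := by
      ext i j
      fin_cases i <;> fin_cases j <;>
        simp [R₂, Matrix.mul_apply, Fin.sum_univ_three, Matrix.vecHead, Matrix.vecTail] <;>
        (try ring_nf) <;> (try simp only [s2_pow]) <;> (try ring_nf) <;> (try norm_num)
    have h6 : (!![1, 0, 0; (1/2), (1 - s2), (-1); (1/2), ((-1) - s2), s2] : Matrix (Fin 3) (Fin 3) ℂ) * R₃ = !![1, 0, 0; 1, (1 - s2), (-2); 1, ((-1) - s2), ((-1) + s2)] := by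
      ext i j
      fin_cases i <;> fin_cases j <;>
        simp [R₃, Matrix.mul_apply, Fin.sum_univ_three, Matrix.vecHead, Matrix.vecTail] <;>
        (try ring_nf) <;> (try simp only [s2_pow]) <;> (try ring_nf) <;> (try norm_num)
    have h7 : (!![1, 0, 0; 1, (1 - s2), (-2); 1, ((-1) - s2), ((-1) + s2)] : Matrix (Fin 3) (Fin 3) ℂ) * R₁ = !![1, 0, 0; 1, ((-1) + s2), 2; 1, s2, (1 - s2)] := by
      ext i j
      fin_cases i <;> fin_cases j <;>
        simp [R₁, Matrix.mul_apply, Fin.sum_univ_three, Matrix.vecHead, Matrix.vecTail] <;>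
        (try ring_nf) <;> (try simp only [s2_pow]) <;> (try ring_nf) <;> (try norm_num)
    have h8 : (!![1, 0, 0; 1, ((-1) + s2), 2; 1, s2, (1 - s2)] : Matrix (Fin 3) (Fin 3) ℂ) * R₂ = !![1, 0, 0; 1, 1, 0; 1, (1 - s2), (-1)] := by
      ext i j
      fin_cases i <;> fin_cases j <;>
        simp [R₂, Matrix.mul_apply, Fin.sum_univ_three, Matrix.vecHead, Matrix.vecTail] <;>
        (try ring_nf) <;> (try simp only [s2_pow]) <;> (try ring_nf) <;> (try norm_num)
    have h9 : (!![1, 0, 0; 1, 1, 0; 1, (1 - s2), (-1)] : Matrix (Fin 3) (Fin 3) ℂ) * R₁ = !![1, 0, 0; 1, 1, 0; 1, 0, 1] := by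
      ext i j
      fin_cases i <;> fin_cases j <;>
        simp [R₁, Matrix.mul_apply, Fin.sum_univ_three, Matrix.vecHead, Matrix.vecTail] <;>
        (try ring_nf) <;> (try simp only [s2_pow]) <;> (try ring_nf) <;> (try norm_num)
    rw [h1, h2, h3, h4, h5, h6, h7, h8, h9, T]

lemma word₃ : R₃*R₂*R₁*R₂*R₃*R₂*R₁*R₂*R₃*R₁ = T 0 1 := by
    have h1 : (R₃ : Matrix (Fin 3) (Fin 3) ℂ) * R₂ = !![1, 0, 0; ((1/2) + (1/2) * s2), -s2, (-1); 1, ((-1) - s2), ((-1) + s2)] := by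
      ext i j
      fin_cases i <;> fin_cases j <;>
        simp [R₁, R₂, R₃, Matrix.mul_apply, Fin.sum_univ_three, Matrix.vecHead, Matrix.vecTail] <;>
        (try ring_nf) <;> (try simp only [s2_pow]) <;> (try ring_nf) <;> (try norm_num)
    have h2 : (!![1, 0, 0; ((1/2) + (1/2) * s2), -s2, (-1); 1, ((-1) - s2), ((-1) + s2)] : Matrix (Fin 3) (Fin 3) ℂ) * R₁ = !![1, 0, 0; ((1/2) + (1/2) * s2), (-1), 1; 1, s2, (1 - s2)] := by
      ext i j
      fin_cases i <;> fin_cases j <;>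
        simp [R₁, Matrix.mul_apply, Fin.sum_univ_three, Matrix.vecHead, Matrix.vecTail] <;>
        (try ring_nf) <;> (try simp only [s2_pow]) <;> (try ring_nf) <;> (try norm_num)
    have h3 : (!![1, 0, 0; ((1/2) + (1/2) * s2), (-1), 1; 1, s2, (1 - s2)] : Matrix (Fin 3) (Fin 3) ℂ) * R₂ = !![1, 0, 0; ((1/2) + (1/2) * s2), 2, ((-1) - s2); 1, (1 - s2), (-1)] := by
      ext i j
      fin_cases i <;> fin_cases j <;>
        simp [R₂, Matrix.mul_apply, Fin.sum_univ_three, Matrix.vecHead, Matrix.vecTail] <;>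
        (try ring_nf) <;> (try simp only [s2_pow]) <;> (try ring_nf) <;> (try norm_num)
    have h4 : (!![1, 0, 0; ((1/2) + (1/2) * s2), 2, ((-1) - s2); 1, (1 - s2), (-1)] : Matrix (Fin 3) (Fin 3) ℂ) * R₃ = !![1, 0, 0; ((1/2) + (1/2) * s2), 2, ((-1) - s2); (3/2), (1 - s2), (-2)] := by
      ext i j
      fin_cases i <;> fin_cases j <;>
        simp [R₃, Matrix.mul_apply, Fin.sum_univ_three, Matrix.vecHead, Matrix.vecTail] <;>
        (try ring_nf) <;> (try simp only [s2_pow]) <;> (try ring_nf) <;> (try norm_num)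
    have h5 : (!![1, 0, 0; ((1/2) + (1/2) * s2), 2, ((-1) - s2); (3/2), (1 - s2), (-2)] : Matrix (Fin 3) (Fin 3) ℂ) * R₂ = !![1, 0, 0; ((1/2) + (1/2) * s2), (-1), 1; (3/2), (-1), 0] := by
      ext i j
      fin_cases i <;> fin_cases j <;>
        simp [R₂, Matrix.mul_apply, Fin.sum_univ_three, Matrix.vecHead, Matrix.vecTail] <;>
        (try ring_nf) <;> (try simp only [s2_pow]) <;> (try ring_nf) <;> (try norm_num)
    have h6 : (!![1, 0, 0; ((1/2) + (1/2) * s2), (-1), 1; (3/2), (-1), 0] : Matrix (Fin 3) (Fin 3) ℂ) * R₁ = !![1, 0, 0; ((1/2) + (1/2) * s2), -s2, (-1); (3/2), (-1), 0] := by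
      ext i j
      fin_cases i <;> fin_cases j <;>
        simp [R₁, Matrix.mul_apply, Fin.sum_univ_three, Matrix.vecHead, Matrix.vecTail] <;>
        (try ring_nf) <;> (try simp only [s2_pow]) <;> (try ring_nf) <;> (try norm_num)
    have h7 : (!![1, 0, 0; ((1/2) + (1/2) * s2), -s2, (-1); (3/2), (-1), 0] : Matrix (Fin 3) (Fin 3) ℂ) * R₂ = !![1, 0, 0; ((1/2) + (1/2) * s2), 1, ((-1) - s2); (3/2), (1 - s2), (-2)] := by
      ext i j
      fin_cases i <;> fin_cases j <;>
        simp [R₂, Matrix.mul_apply, Fin.sum_univ_three, Matrix.vecHead, Matrix.vecTail] <;>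
        (try ring_nf) <;> (try simp only [s2_pow]) <;> (try ring_nf) <;> (try norm_num)
    have h8 : (!![1, 0, 0; ((1/2) + (1/2) * s2), 1, ((-1) - s2); (3/2), (1 - s2), (-2)] : Matrix (Fin 3) (Fin 3) ℂ) * R₃ = !![1, 0, 0; 0, 1, 0; 1, (1 - s2), (-1)] := by
      ext i j
      fin_cases i <;> fin_cases j <;>
        simp [R₃, Matrix.mul_apply, Fin.sum_univ_three, Matrix.vecHead, Matrix.vecTail] <;>
        (try ring_nf) <;> (try simp only [s2_pow]) <;> (try ring_nf) <;> (try norm_num)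
    have h9 : (!![1, 0, 0; 0, 1, 0; 1, (1 - s2), (-1)] : Matrix (Fin 3) (Fin 3) ℂ) * R₁ = !![1, 0, 0; 0, 1, 0; 1, 0, 1] := by
      ext i j
      fin_cases i <;> fin_cases j <;>
        simp [R₁, Matrix.mul_apply, Fin.sum_univ_three, Matrix.vecHead, Matrix.vecTail] <;>
        (try ring_nf) <;> (try simp only [s2_pow]) <;> (try ring_nf) <;> (try norm_num)
    rw [h1, h2, h3, h4, h5, h6, h7, h8, h9, T]

lemma word₄ : R₃*R₁*R₂*R₁*R₃*R₁*R₂*R₁*R₃*R₂ = T s2 1 := by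
    have h1 : (R₃ : Matrix (Fin 3) (Fin 3) ℂ) * R₁ = !![1, 0, 0; ((1/2) + (1/2) * s2), (-2), (1 + s2); 1, ((-1) + s2), 1] := by
      ext i j
      fin_cases i <;> fin_cases j <;>
        simp [R₁, R₂, R₃, Matrix.mul_apply, Fin.sum_univ_three, Matrix.vecHead, Matrix.vecTail] <;>
        (try ring_nf) <;> (try simp only [s2_pow]) <;> (try ring_nf) <;> (try norm_num)
    have h2 : (!![1, 0, 0; ((1/2) + (1/2) * s2), (-2), (1 + s2); 1, ((-1) + s2), 1] : Matrix (Fin 3) (Fin 3) ℂ) * R₂ = !![1, 0, 0; ((1/2) + (1/2) * s2), 1, (-1); 1, -s2, ((-1) + s2)] := by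
      ext i j
      fin_cases i <;> fin_cases j <;>
        simp [R₂, Matrix.mul_apply, Fin.sum_univ_three, Matrix.vecHead, Matrix.vecTail] <;>
        (try ring_nf) <;> (try simp only [s2_pow]) <;> (try ring_nf) <;> (try norm_num)
    have h3 : (!![1, 0, 0; ((1/2) + (1/2) * s2), 1, (-1); 1, -s2, ((-1) + s2)] : Matrix (Fin 3) (Fin 3) ℂ) * R₁ = !![1, 0, 0; ((1/2) + (1/2) * s2), s2, 1; 1, (1 + s2), (1 - s2)] := by
      ext i j
      fin_cases i <;> fin_cases j <;>
        simp [R₁, Matrix.mul_apply, Fin.sum_univ_three, Matrix.vecHead, Matrix.vecTail] <;>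
        (try ring_nf) <;> (try simp only [s2_pow]) <;> (try ring_nf) <;> (try norm_num)
    have h4 : (!![1, 0, 0; ((1/2) + (1/2) * s2), s2, 1; 1, (1 + s2), (1 - s2)] : Matrix (Fin 3) (Fin 3) ℂ) * R₃ = !![1, 0, 0; ((1/2) + s2), s2, (1 - s2); (3/2), (1 + s2), -s2] := by
      ext i j
      fin_cases i <;> fin_cases j <;>
        simp [R₃, Matrix.mul_apply, Fin.sum_univ_three, Matrix.vecHead, Matrix.vecTail] <;>
        (try ring_nf) <;> (try simp only [s2_pow]) <;> (try ring_nf) <;> (try norm_num)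
    have h5 : (!![1, 0, 0; ((1/2) + s2), s2, (1 - s2); (3/2), (1 + s2), -s2] : Matrix (Fin 3) (Fin 3) ℂ) * R₁ = !![1, 0, 0; ((1/2) + s2), ((-1) - s2), ((-1) + s2); (3/2), (-1), s2] := by
      ext i j
      fin_cases i <;> fin_cases j <;>
        simp [R₁, Matrix.mul_apply, Fin.sum_univ_three, Matrix.vecHead, Matrix.vecTail] <;>
        (try ring_nf) <;> (try simp only [s2_pow]) <;> (try ring_nf) <;> (try norm_num)
    have h6 : (!![1, 0, 0; ((1/2) + s2), ((-1) - s2), ((-1) + s2); (3/2), (-1), s2] : Matrix (Fin 3) (Fin 3) ℂ) * R₂ = !![1, 0, 0; ((1/2) + s2), 0, (-1); (3/2), (-1), s2] := by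
      ext i j
      fin_cases i <;> fin_cases j <;>
        simp [R₂, Matrix.mul_apply, Fin.sum_univ_three, Matrix.vecHead, Matrix.vecTail] <;>
        (try ring_nf) <;> (try simp only [s2_pow]) <;> (try ring_nf) <;> (try norm_num)
    have h7 : (!![1, 0, 0; ((1/2) + s2), 0, (-1); (3/2), (-1), s2] : Matrix (Fin 3) (Fin 3) ℂ) * R₁ = !![1, 0, 0; ((1/2) + s2), ((-1) + s2), 1; (3/2), (1 + s2), -s2] := by
      ext i j
      fin_cases i <;> fin_cases j <;>
        simp [R₁, Matrix.mul_apply, Fin.sum_univ_three, Matrix.vecHead, Matrix.vecTail] <;>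
        (try ring_nf) <;> (try simp only [s2_pow]) <;> (try ring_nf) <;> (try norm_num)
    have h8 : (!![1, 0, 0; ((1/2) + s2), ((-1) + s2), 1; (3/2), (1 + s2), -s2] : Matrix (Fin 3) (Fin 3) ℂ) * R₃ = !![1, 0, 0; s2, ((-1) + s2), 2; 1, (1 + s2), (1 - s2)] := by
      ext i j
      fin_cases i <;> fin_cases j <;>
        simp [R₃, Matrix.mul_apply, Fin.sum_univ_three, Matrix.vecHead, Matrix.vecTail] <;>
        (try ring_nf) <;> (try simp only [s2_pow]) <;> (try ring_nf) <;> (try norm_num)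
    have h9 : (!![1, 0, 0; s2, ((-1) + s2), 2; 1, (1 + s2), (1 - s2)] : Matrix (Fin 3) (Fin 3) ℂ) * R₂ = !![1, 0, 0; s2, 1, 0; 1, 0, 1] := by
      ext i j
      fin_cases i <;> fin_cases j <;>
        simp [R₂, Matrix.mul_apply, Fin.sum_univ_three, Matrix.vecHead, Matrix.vecTail] <;>
        (try ring_nf) <;> (try simp only [s2_pow]) <;> (try ring_nf) <;> (try norm_num)
    rw [h1, h2, h3, h4, h5, h6, h7, h8, h9, T]

lemma T_mul (a b c d : ℂ) : T a b * T c d = T (a + c) (b + d) := by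
  ext i j
  fin_cases i <;> fin_cases j <;>
    simp [T, Matrix.mul_apply, Fin.sum_univ_three, Matrix.vecHead, Matrix.vecTail] <;> ring

lemma T_one : T 0 0 = 1 := by
  rw [one_fin_three, T]

noncomputable def u₁ : GL (Fin 3) ℂ := ⟨R₁, R₁, R₁_sq, R₁_sq⟩
noncomputable def u₂ : GL (Fin 3) ℂ := ⟨R₂, R₂, R₂_sq, R₂_sq⟩
noncomputable def u₃ : GL (Fin 3) ℂ := ⟨R₃, R₃, R₃_sq, R₃_sq⟩

lemma u₁_mem : u₁ ∈ G := Subgroup.subset_closure (Or.inl rfl)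
lemma u₂_mem : u₂ ∈ G := Subgroup.subset_closure (Or.inr (Or.inl rfl))
lemma u₃_mem : u₃ ∈ G := Subgroup.subset_closure (Or.inr (Or.inr rfl))

/-- The set of translation vectors realized in G, as an additive subgroup of ℂ². -/
noncomputable def L : AddSubgroup (ℂ × ℂ) where
  carrier := {p | ∃ g : GL (Fin 3) ℂ, g ∈ G ∧ (g : Matrix (Fin 3) (Fin 3) ℂ) = T p.1 p.2}
  zero_mem' := ⟨1, one_mem _, by
    simp only [Prod.fst_zero, Prod.snd_zero, Units.val_one, T_one]⟩
  add_mem' := by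
    rintro p q ⟨g, hgG, hg⟩ ⟨h, hhG, hh⟩
    exact ⟨g * h, mul_mem hgG hhG, by rw [Units.val_mul, hg, hh, T_mul]; rfl⟩
  neg_mem' := by
    rintro p ⟨g, hgG, hg⟩
    refine ⟨g⁻¹, inv_mem hgG, ?_⟩
    have h1 : ((g⁻¹ : GL (Fin 3) ℂ) : Matrix (Fin 3) (Fin 3) ℂ) * g = 1 := by
      rw [← Units.val_mul, inv_mul_cancel, Units.val_one]
    calc ((g⁻¹ : GL (Fin 3) ℂ) : Matrix (Fin 3) (Fin 3) ℂ)
        = ((g⁻¹ : GL (Fin 3) ℂ) : Matrix (Fin 3) (Fin 3) ℂ) *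
          (T p.1 p.2 * T (-p).1 (-p).2) := by
          rw [T_mul]
          have : T (p.1 + (-p).1) (p.2 + (-p).2) = 1 := by
            rw [show p.1 + (-p).1 = 0 by simp, show p.2 + (-p).2 = 0 by simp, T_one]
          rw [this, mul_one]
      _ = (((g⁻¹ : GL (Fin 3) ℂ) : Matrix (Fin 3) (Fin 3) ℂ) *
          (g : Matrix (Fin 3) (Fin 3) ℂ)) * T (-p).1 (-p).2 := by rw [hg, mul_assoc]
      _ = T (-p).1 (-p).2 := by rw [h1, one_mul]

lemma mem_L₁ : ((1 : ℂ), -s2) ∈ L :=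
  ⟨u₁*u₂*u₃*u₁*u₂*u₁*u₂*u₃*u₁*u₂,
   by apply_rules [mul_mem, u₁_mem, u₂_mem, u₃_mem],
   by simp only [Units.val_mul]; exact word₁⟩

lemma mem_L₂ : ((1 : ℂ), (1 : ℂ)) ∈ L :=
  ⟨u₂*u₃*u₁*u₂*u₁*u₂*u₃*u₁*u₂*u₁,
   by apply_rules [mul_mem, u₁_mem, u₂_mem, u₃_mem],
   by simp only [Units.val_mul]; exact word₂⟩

lemma mem_L₃ : ((0 : ℂ), (1 : ℂ)) ∈ L :=
  ⟨u₃*u₂*u₁*u₂*u₃*u₂*u₁*u₂*u₃*u₁,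
   by apply_rules [mul_mem, u₁_mem, u₂_mem, u₃_mem],
   by simp only [Units.val_mul]; exact word₃⟩

lemma mem_L₄ : (s2, (1 : ℂ)) ∈ L :=
  ⟨u₃*u₁*u₂*u₁*u₃*u₁*u₂*u₁*u₃*u₂,
   by apply_rules [mul_mem, u₁_mem, u₂_mem, u₃_mem],
   by simp only [Units.val_mul]; exact word₄⟩

lemma mem_L_e1 : ((1 : ℂ), (0 : ℂ)) ∈ L := by
  have h := sub_mem mem_L₂ mem_L₃
  have e : ((1 : ℂ), (1 : ℂ)) - ((0 : ℂ), (1 : ℂ)) = ((1 : ℂ), (0 : ℂ)) := by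
    rw [Prod.mk_sub_mk]; norm_num
  rwa [e] at h

lemma mem_L_e2 : (s2, (0 : ℂ)) ∈ L := by
  have h := sub_mem mem_L₄ mem_L₃
  have e : (s2, (1 : ℂ)) - ((0 : ℂ), (1 : ℂ)) = (s2, (0 : ℂ)) := by
    rw [Prod.mk_sub_mk]; norm_num
  rwa [e] at h

lemma mem_L_e4 : ((0 : ℂ), s2) ∈ L := by
  have h := sub_mem mem_L_e1 mem_L₁
  have e : ((1 : ℂ), (0 : ℂ)) - ((1 : ℂ), -s2) = ((0 : ℂ), s2) := by
    rw [Prod.mk_sub_mk]; norm_num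
  rwa [e] at h

/-! #### Main theorem. -/

/-- a translation T_{(v₁,v₂)} lies in G iff v₁ and v₂ lie in the lattice
ℤ ⊕ i√2·ℤ; i.e. the kernel of the linear-part homomorphism is T_Λ with Λ = (ℤ ⊕ i√2ℤ)². -/
theorem stmt_15 (v₁ v₂ : ℂ) :
    (∃ g : GL (Fin 3) ℂ, g ∈ G ∧ (g : Matrix (Fin 3) (Fin 3) ℂ) = T v₁ v₂) ↔
    ∃ a b c d : ℤ, v₁ = (a : ℂ) + (b : ℂ) * s2 ∧ v₂ = (c : ℂ) + (d : ℂ) * s2 := by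
  constructor
  · rintro ⟨g, hgG, hgT⟩
    have hP := main_fwd g hgG
    rw [hgT] at hP
    obtain ⟨t₁, t₂, e₀, e₁, e₂, e₃, _, _, _, h4, h5, h6, h7, h8, h9, hmem⟩ := hP
    simp only [T] at h4 h5 h6 h7 h8 h9
    norm_num [Matrix.cons_val_two] at h4 h5 h6 h7 h8 h9
    have he₀ : e₀ = (1, 0) := c2_inj (by rw [← h6, c2_one])
    have he₁ : e₁ = (0, 0) := c2_inj (by rw [← h7, c2_zero])
    have he₂ : e₂ = (0, 0) := c2_inj (by rw [← h8, c2_zero])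
    have he₃ : e₃ = (1, 0) := c2_inj (by rw [← h9, c2_one])
    subst he₀ he₁ he₂ he₃
    have hrd : ((((rd (1,0), rd (0,0)), (rd (0,0), rd (1,0))) : MM)) =
        (((1, 0), (0, 0)), ((0, 0), (1, 0))) := by decide
    have hid := gam_id _ hmem hrd
    rw [Prod.ext_iff] at hid
    obtain ⟨hid1, hid2⟩ := hid
    rw [show (((0,0),(0,0)) : VV).1 = ((0 : ZMod 2), (0 : ZMod 2)) from rfl] at hid1
    rw [show (((0,0),(0,0)) : VV).2 = ((0 : ZMod 2), (0 : ZMod 2)) from rfl] at hid2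
    simp only [rd, Prod.mk.injEq] at hid1 hid2
    obtain ⟨ha', hb'⟩ := hid1
    obtain ⟨hc', hd'⟩ := hid2
    obtain ⟨a, ha⟩ := (ZMod.intCast_zmod_eq_zero_iff_dvd t₁.1 2).mp ha'
    obtain ⟨b, hb⟩ := (ZMod.intCast_zmod_eq_zero_iff_dvd t₁.2 2).mp hb'
    obtain ⟨c, hc⟩ := (ZMod.intCast_zmod_eq_zero_iff_dvd t₂.1 2).mp hc'
    obtain ⟨d, hd⟩ := (ZMod.intCast_zmod_eq_zero_iff_dvd t₂.2 2).mp hd'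
    refine ⟨a, b, c, d, ?_, ?_⟩
    · rw [h4, c2, ha, hb]; push_cast; ring
    · rw [h5, c2, hc, hd]; push_cast; ring
  · rintro ⟨a, b, c, d, h1, h2⟩
    have hv : (v₁, v₂) ∈ L := by
      have hmem : a • ((1 : ℂ), (0 : ℂ)) + b • (s2, (0 : ℂ)) +
          c • ((0 : ℂ), (1 : ℂ)) + d • ((0 : ℂ), s2) ∈ L :=
        add_mem (add_mem (add_mem (zsmul_mem mem_L_e1 a) (zsmul_mem mem_L_e2 b))
          (zsmul_mem mem_L₃ c)) (zsmul_mem mem_L_e4 d)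
      have heq : (v₁, v₂) = a • ((1 : ℂ), (0 : ℂ)) + b • (s2, (0 : ℂ)) +
          c • ((0 : ℂ), (1 : ℂ)) + d • ((0 : ℂ), s2) := by
        rw [h1, h2]
        simp [Prod.ext_iff, zsmul_eq_mul]
      rw [heq]
      exact hmem
    exact hv
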